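/- Let f : R^d → R be μ-strongly convex and L-smooth, with minimizer x*. Suppose at iteration k we are given a symmetric matrix G ⪰ μI with ‖G‖ ≤ max{L̃, μ} for some L̃ > 0, and set x^{k+1} = x^k − (1/κ) G^{-1}∇f(x^k) with κ := L/μ. Then f(x^{k+1}) − f(x*) ≤ (1 − (μ/L)·min{μ/L̃, 1}) (f(x^k) − f(x*)). -/

import Mathlib

open scoped RealInnerProductSpace
open Set Filter Topology

variable {E : Type*} [NormedAddCommGroup E] [InnerProductSpace ℝ E] [CompleteSpace E]

lemma aux_line_deriv (f : E → ℝ) (g : E → E) (hgrad : ∀ x, HasGradientAt f (g x) x)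
    (x v : E) (t : ℝ) :
    HasDerivAt (fun t : ℝ => f (x + t • v)) ⟪g (x + t • v), v⟫ t := by
  have hc : HasDerivAt (fun t : ℝ => x + t • v) v t := by
    simpa using ((hasDerivAt_id t).smul_const v).const_add x
  have h := (hasGradientAt_iff_hasFDerivAt.mp (hgrad (x + t • v))).comp_hasDerivAt t hc
  have h' : HasDerivAt (fun t : ℝ => f (x + t • v)) ((InnerProductSpace.toDual ℝ E (g (x + t • v))) v) t := h
  simpa [InnerProductSpace.toDual_apply_apply] using h'

lemma aux_descent (f : E → ℝ) (g : E → E) (L : ℝ) (hL : 0 < L)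
    (hgrad : ∀ x, HasGradientAt f (g x) x)
    (hsmooth : ∀ x y, ‖g x - g y‖ ≤ L * ‖x - y‖) (x v : E) :
    f (x + v) ≤ f x + ⟪g x, v⟫ + L / 2 * ‖v‖ ^ 2 := by
  set h : ℝ → ℝ := fun t => f (x + t • v) - (f x + t * ⟪g x, v⟫ + L / 2 * ‖v‖ ^ 2 * t ^ 2) with hh
  have hderiv : ∀ t : ℝ, HasDerivAt h
      (⟪g (x + t • v), v⟫ - (⟪g x, v⟫ + L / 2 * ‖v‖ ^ 2 * (2 * t))) t := by
    intro t
    have h1 := aux_line_deriv f g hgrad x v t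
    have h2 : HasDerivAt (fun t : ℝ => f x + t * ⟪g x, v⟫ + L / 2 * ‖v‖ ^ 2 * t ^ 2)
        (⟪g x, v⟫ + L / 2 * ‖v‖ ^ 2 * (2 * t)) t := by
      have ha : HasDerivAt (fun t : ℝ => t * ⟪g x, v⟫) ⟪g x, v⟫ t := by
        simpa using (hasDerivAt_id t).mul_const ⟪g x, v⟫
      have hb : HasDerivAt (fun t : ℝ => L / 2 * ‖v‖ ^ 2 * t ^ 2)
          (L / 2 * ‖v‖ ^ 2 * (2 * t)) t := by
        have hp := (hasDerivAt_pow 2 t).const_mul (L / 2 * ‖v‖ ^ 2)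
        norm_num at hp
        convert hp using 1
      exact (ha.const_add (f x)).add hb
    exact h1.sub h2
  have hanti : AntitoneOn h (Icc (0:ℝ) 1) := by
    apply antitoneOn_of_deriv_nonpos (convex_Icc 0 1)
    · exact Continuous.continuousOn (by
        have : Differentiable ℝ h := fun t => (hderiv t).differentiableAt
        exact this.continuous)
    · intro t ht
      exact (hderiv t).differentiableAt.differentiableWithinAt
    · intro t ht
      rw [interior_Icc] at ht
      rw [(hderiv t).deriv]
      have h3 : ⟪g (x + t • v), v⟫ - ⟪g x, v⟫ ≤ L * t * ‖v‖ ^ 2 := by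
        rw [← inner_sub_left]
        calc ⟪g (x + t • v) - g x, v⟫ ≤ ‖g (x + t • v) - g x‖ * ‖v‖ := real_inner_le_norm _ _
          _ ≤ (L * ‖(x + t • v) - x‖) * ‖v‖ := by
              gcongr; exact hsmooth _ _
          _ = L * t * ‖v‖ ^ 2 := by
              simp [norm_smul, abs_of_pos ht.1]; ring
      nlinarith [ht.1.le]
  have h0 : h 1 ≤ h 0 := hanti (by norm_num) (by norm_num) (by norm_num)
  simp only [hh] at h0
  norm_num at h0
  linarith

lemma aux_sc_lb (f : E → ℝ) (g : E → E) (μ : ℝ)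
    (hgrad : ∀ x, HasGradientAt f (g x) x)
    (hsc : StrongConvexOn Set.univ μ f) (x y : E) :
    f x + ⟪g x, y - x⟫ + μ / 2 * ‖y - x‖ ^ 2 ≤ f y := by
  set v := y - x with hv
  set r := ‖v‖ with hr
  have key : ∀ b : ℝ, b ∈ Ioc (0:ℝ) 1 →
      (f (x + b • v) - f x) / b ≤ f y - f x - (1 - b) * (μ / 2 * r ^ 2) := by
    intro b hb
    have h := hsc.2 (Set.mem_univ y) (Set.mem_univ x) hb.1.le (by linarith [hb.2] : (0:ℝ) ≤ 1 - b)
      (by ring)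
    have heq : b • y + (1 - b) • x = x + b • v := by
      simp [hv]; module
    rw [heq] at h
    have hnorm : ‖y - x‖ = r := rfl
    rw [smul_eq_mul, smul_eq_mul, hnorm] at h
    rw [div_le_iff₀ hb.1]
    nlinarith [hb.1]
  have hslope : Tendsto (fun b : ℝ => (f (x + b • v) - f x) / b) (𝓝[>] (0:ℝ))
      (𝓝 ⟪g x, v⟫) := by
    have hd := aux_line_deriv f g hgrad x v 0
    simp only [zero_smul, add_zero] at hd
    have := hasDerivAt_iff_tendsto_slope.mp hd
    have h2 := this.mono_left (nhdsWithin_mono 0 (fun b hb => ne_of_gt hb))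
    refine h2.congr' ?_
    filter_upwards [self_mem_nhdsWithin] with b hb
    simp [slope, hb, div_eq_inv_mul]
  have hrhs : Tendsto (fun b : ℝ => f y - f x - (1 - b) * (μ / 2 * r ^ 2)) (𝓝[>] (0:ℝ))
      (𝓝 (f y - f x - μ / 2 * r ^ 2)) := by
    have : ContinuousAt (fun b : ℝ => f y - f x - (1 - b) * (μ / 2 * r ^ 2)) 0 := by
      fun_prop
    simpa using this.continuousWithinAt.tendsto
  have hle : ⟪g x, v⟫ ≤ f y - f x - μ / 2 * r ^ 2 := by
    refine le_of_tendsto_of_tendsto hslope hrhs ?_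
    filter_upwards [Ioc_mem_nhdsGT (by norm_num : (0:ℝ) < 1)] with b hb
    exact key b hb
  linarith

lemma aux_psd_cs (A : E →L[ℝ] E) (hsym : ∀ v w, ⟪A v, w⟫ = ⟪v, A w⟫)
    (hpos : ∀ v, 0 ≤ ⟪A v, v⟫) (v w : E) :
    ⟪A v, w⟫ ^ 2 ≤ ⟪A v, v⟫ * ⟪A w, w⟫ := by
  have key : ∀ t : ℝ, 0 ≤ ⟪A w, w⟫ * (t * t) + (2 * ⟪A v, w⟫) * t + ⟪A v, v⟫ := by
    intro t
    have h := hpos (v + t • w)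
    have hexp : ⟪A (v + t • w), v + t • w⟫
        = ⟪A v, v⟫ + t * ⟪A v, w⟫ + t * ⟪A w, v⟫ + t * t * ⟪A w, w⟫ := by
      simp [map_add, map_smul, inner_add_left, inner_add_right, real_inner_smul_left,
        real_inner_smul_right]
      ring
    have hcomm : ⟪A w, v⟫ = ⟪A v, w⟫ := by
      rw [hsym w v, real_inner_comm]
    rw [hexp, hcomm] at h
    linarith
  have := discrim_le_zero key
  rw [discrim] at this
  nlinarith

set_option maxHeartbeats 1600000 in
/-- one step of FedNL-LS with matrix `G ⪰ μI`, `‖G‖ ≤ max{L̃, μ}` and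
step size `1/κ`, `κ = L/μ`, decreases the function gap by the factor
`1 − (μ/L)·min{μ/L̃, 1}`. -/
theorem fednl_ls_one_step {d : ℕ}
    (f : EuclideanSpace ℝ (Fin d) → ℝ)
    (g : EuclideanSpace ℝ (Fin d) → EuclideanSpace ℝ (Fin d))
    (L Ltilde μ : ℝ) (hμ : 0 < μ) (hL : 0 < L) (hLt : 0 < Ltilde)
    (xstar : EuclideanSpace ℝ (Fin d))
    (hgrad : ∀ x, HasGradientAt f (g x) x)
    (hsmooth : ∀ x y, ‖g x - g y‖ ≤ L * ‖x - y‖)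
    (hsc : StrongConvexOn Set.univ μ f)
    (hstar : g xstar = 0)
    (G : EuclideanSpace ℝ (Fin d) →L[ℝ] EuclideanSpace ℝ (Fin d))
    (hGsym : ∀ v w, ⟪G v, w⟫ = ⟪v, G w⟫)
    (hGpos : ∀ v, μ * ‖v‖ ^ 2 ≤ ⟪G v, v⟫)
    (hGnorm : ‖G‖ ≤ max Ltilde μ)
    (Ginv : EuclideanSpace ℝ (Fin d) →L[ℝ] EuclideanSpace ℝ (Fin d))
    (hinv1 : Ginv.comp G = ContinuousLinearMap.id ℝ _)
    (hinv2 : G.comp Ginv = ContinuousLinearMap.id ℝ _)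
    (xk xnext : EuclideanSpace ℝ (Fin d))
    (hiter : xnext = xk - (1 / (L / μ)) • Ginv (g xk)) :
    f xnext - f xstar ≤ (1 - μ / L * min (μ / Ltilde) 1) * (f xk - f xstar) := by
  set M := max Ltilde μ with hM
  have hM0 : 0 < M := lt_of_lt_of_le hμ (le_max_right _ _)
  set u := g xk with hu
  set p := Ginv u with hp
  have hGp : G p = u := by
    have := congrArg (fun T : EuclideanSpace ℝ (Fin d) →L[ℝ] EuclideanSpace ℝ (Fin d) => T u) hinv2
    simpa using this
  set A : EuclideanSpace ℝ (Fin d) →L[ℝ] EuclideanSpace ℝ (Fin d) :=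
    M • ContinuousLinearMap.id ℝ _ - G with hA
  have hAapp : ∀ v, A v = M • v - G v := by intro v; simp [hA]
  have hAsym : ∀ v w, ⟪A v, w⟫ = ⟪v, A w⟫ := by
    intro v w
    simp only [hAapp, inner_sub_left, inner_sub_right, real_inner_smul_left, real_inner_smul_right]
    rw [hGsym]
  have hAub : ∀ v, ⟪G v, v⟫ ≤ M * ‖v‖ ^ 2 := by
    intro v
    calc ⟪G v, v⟫ ≤ ‖G v‖ * ‖v‖ := real_inner_le_norm _ _
      _ ≤ (‖G‖ * ‖v‖) * ‖v‖ := by gcongr; exact G.le_opNorm v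
      _ ≤ (M * ‖v‖) * ‖v‖ := by gcongr
      _ = M * ‖v‖ ^ 2 := by ring
  have hApos : ∀ v, 0 ≤ ⟪A v, v⟫ := by
    intro v
    have := hAub v
    rw [hAapp, inner_sub_left, real_inner_smul_left, real_inner_self_eq_norm_sq]
    linarith
  have hAkey : ∀ v, ‖A v‖ ^ 2 ≤ M * ⟪A v, v⟫ := by
    intro v
    have hcs := aux_psd_cs A hAsym hApos v (A v)
    have h1 : ⟪A v, A v⟫ = ‖A v‖ ^ 2 := real_inner_self_eq_norm_sq _
    have h2 : ⟪A (A v), A v⟫ ≤ M * ‖A v‖ ^ 2 := by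
      have hub := hAub (A v)
      have hGlb := hGpos (A v)
      have heq : ⟪A (A v), A v⟫ = M * ‖A v‖ ^ 2 - ⟪G (A v), A v⟫ := by
        rw [hAapp (A v), inner_sub_left, real_inner_smul_left, real_inner_self_eq_norm_sq]
      rw [heq]
      linarith [sq_nonneg ‖A v‖, mul_nonneg hμ.le (sq_nonneg ‖A v‖)]
    rw [h1] at hcs
    have hAvv := hApos v
    set a := ‖A v‖ ^ 2 with ha
    set b := ⟪A v, v⟫ with hb
    have ha0 : 0 ≤ a := sq_nonneg _
    have hcs2 : a ^ 2 ≤ b * (M * a) := le_trans hcs (by nlinarith)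
    rcases eq_or_lt_of_le ha0 with hz | hz
    · nlinarith
    · nlinarith
  have h2 : ‖u‖ ^ 2 ≤ M * ⟪u, p⟫ := by
    have hk := hAkey p
    have e1 : A p = M • p - u := by rw [hAapp, hGp]
    have e2 : ⟪A p, p⟫ = M * ‖p‖ ^ 2 - ⟪u, p⟫ := by
      rw [e1, inner_sub_left, real_inner_smul_left, real_inner_self_eq_norm_sq]
    have e3 : ‖A p‖ ^ 2 = M ^ 2 * ‖p‖ ^ 2 - 2 * M * ⟪u, p⟫ + ‖u‖ ^ 2 := by
      rw [← real_inner_self_eq_norm_sq, e1, inner_sub_left, inner_sub_right, inner_sub_right,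
        real_inner_smul_left, real_inner_smul_right, real_inner_smul_left,
        real_inner_smul_right, real_inner_self_eq_norm_sq, real_inner_self_eq_norm_sq, real_inner_comm p u]
      ring
    rw [e2, e3] at hk
    linarith
  have h1 : μ * ‖p‖ ^ 2 ≤ ⟪u, p⟫ := by
    have := hGpos p
    rwa [hGp] at this
  have hup0 : 0 ≤ ⟪u, p⟫ := le_trans (by positivity) h1
  set s := μ / L with hs
  have hs0 : 0 < s := by positivity
  have hxn : xnext = xk + (-s) • p := by
    rw [hiter, hs, one_div_div]
    module
  have hdesc : f xnext ≤ f xk - s * ⟪u, p⟫ + L / 2 * s ^ 2 * ‖p‖ ^ 2 := by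
    have hd := aux_descent f g L hL hgrad hsmooth xk ((-s) • p)
    rw [← hxn] at hd
    have he : ⟪u, (-s) • p⟫ = -(s * ⟪u, p⟫) := by
      rw [real_inner_smul_right]; ring
    have hn : ‖(-s) • p‖ ^ 2 = s ^ 2 * ‖p‖ ^ 2 := by
      rw [norm_smul]
      simp [abs_of_pos hs0]
      ring
    rw [he, hn] at hd
    linarith
  -- abstract the scalars
  set c := ⟪u, p⟫ with hc
  set np := ‖p‖ with hnp
  set nu := ‖u‖ with hnu
  have hdesc2 : f xnext ≤ f xk - s / 2 * c := by
    have hcoef : L / 2 * s ^ 2 * np ^ 2 ≤ s / 2 * c := by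
      have h3 : L / 2 * s ^ 2 * np ^ 2 = s / 2 * (μ * np ^ 2) := by
        rw [hs]; field_simp
      rw [h3]
      exact mul_le_mul_of_nonneg_left h1 (by positivity)
    linarith
  have hPL : 2 * μ * (f xk - f xstar) ≤ nu ^ 2 := by
    have hlb := aux_sc_lb f g μ hgrad hsc xk xstar
    set w := ⟪u, xstar - xk⟫ with hw
    set t := ‖xstar - xk‖ with ht
    have hin : -(nu * t) ≤ w := by
      have h4 := abs_real_inner_le_norm u (xstar - xk)
      have h5 := neg_abs_le w
      rw [← hw, ← hnu, ← ht] at h4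
      linarith
    nlinarith [sq_nonneg (nu - μ * t)]
  have hgap : 0 ≤ f xk - f xstar := by
    have hlb := aux_sc_lb f g μ hgrad hsc xstar xk
    rw [hstar] at hlb
    simp only [inner_zero_left] at hlb
    nlinarith [sq_nonneg ‖xk - xstar‖]
  have hupge : 2 * μ * (f xk - f xstar) / M ≤ c := by
    rw [div_le_iff₀ hM0]
    calc 2 * μ * (f xk - f xstar) ≤ nu ^ 2 := hPL
      _ ≤ M * c := h2
      _ = c * M := by ring
  have hmin : min (μ / Ltilde) 1 = μ / M := by
    rcases le_total Ltilde μ with h | h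
    · rw [hM, max_eq_right h, div_self (ne_of_gt hμ), min_eq_right]
      rw [le_div_iff₀ hLt]
      linarith
    · rw [hM, max_eq_left h, min_eq_left]
      rw [div_le_one hLt]
      linarith
  have hfinal : f xnext - f xstar ≤ (1 - s * μ / M) * (f xk - f xstar) := by
    have hmono : s / 2 * (2 * μ * (f xk - f xstar) / M) ≤ s / 2 * c :=
      mul_le_mul_of_nonneg_left hupge (by positivity)
    have heq : s / 2 * (2 * μ * (f xk - f xstar) / M) = s * μ / M * (f xk - f xstar) := by
      field_simp
    rw [heq] at hmono
    nlinarith [hdesc2]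
  calc f xnext - f xstar ≤ (1 - s * μ / M) * (f xk - f xstar) := hfinal
    _ = (1 - μ / L * min (μ / Ltilde) 1) * (f xk - f xstar) := by
        rw [hmin, hs]
        congr 1
        field_simp
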